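/- Let G be a connected graph on n vertices with diameter at least 3 and maximum vertex transmission D_1. Then the distance Laplacian spectral radius satisfies ∂_1^L(G) > D_1 + 2 (strict inequality). -/

import Mathlib

open Finset Matrix Polynomial SimpleGraph

variable {V : Type*} [Fintype V] [DecidableEq V]

/-- The distance matrix of a graph: entries are graph distances (as reals). -/
noncomputable def distMatrix (G : SimpleGraph V) : Matrix V V ℝ :=
  fun i j => (G.dist i j : ℝ)

/-- The transmission of a vertex: sum of distances to all vertices. -/
noncomputable def transmission (G : SimpleGraph V) (i : V) : ℝ :=
  ∑ j, (G.dist i j : ℝ)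

/-- The distance Laplacian matrix `L(G) = Tr(G) - D(G)`. -/
noncomputable def distLaplacian (G : SimpleGraph V) : Matrix V V ℝ :=
  Matrix.diagonal (transmission G) - distMatrix G

/-- The distance signless Laplacian matrix `Q(G) = Tr(G) + D(G)`. -/
noncomputable def distSignlessLaplacian (G : SimpleGraph V) : Matrix V V ℝ :=
  Matrix.diagonal (transmission G) + distMatrix G

/-- `μ` is an eigenvalue of the matrix `A`. -/
def IsEigOf (A : Matrix V V ℝ) (μ : ℝ) : Prop :=
  ∃ x : V → ℝ, x ≠ 0 ∧ A.mulVec x = μ • x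

/-- Largest eigenvalue (spectral radius for our PSD matrices). -/
noncomputable def maxEig (A : Matrix V V ℝ) : ℝ := sSup {μ : ℝ | IsEigOf A μ}

/-- Smallest eigenvalue. -/
noncomputable def minEig (A : Matrix V V ℝ) : ℝ := sInf {μ : ℝ | IsEigOf A μ}

/-- The Wiener index: half the sum of all pairwise distances. -/
noncomputable def wienerIndex (G : SimpleGraph V) : ℝ :=
  (1 / 2) * ∑ i, ∑ j, (G.dist i j : ℝ)

set_option linter.unusedSectionVars false

lemma dotProduct_self_nonneg' (v : V → ℝ) : 0 ≤ v ⬝ᵥ v :=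
  Finset.sum_nonneg fun i _ => mul_self_nonneg (v i)

/-- The Rayleigh quotient of a real symmetric matrix is at most its largest eigenvalue. -/
lemma rayleigh_le_maxEig [Nonempty V] (A : Matrix V V ℝ) (hA : A.IsHermitian) (x : V → ℝ) :
    x ⬝ᵥ A.mulVec x ≤ maxEig A * (x ⬝ᵥ x) := by
  classical
  obtain ⟨i0, -, hi0⟩ := Finset.exists_max_image Finset.univ hA.eigenvalues univ_nonempty
  set M := hA.eigenvalues i0 with hM
  set U : Matrix V V ℝ := (hA.eigenvectorUnitary : Matrix V V ℝ) with hU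
  have hUU : U * star U = 1 := (Matrix.mem_unitaryGroup_iff).mp hA.eigenvectorUnitary.2
  have hdotU : ∀ (y : V → ℝ) (z : V → ℝ), y ⬝ᵥ (U.mulVec z) = ((star U).mulVec y) ⬝ᵥ z := by
    intro y z
    rw [Matrix.dotProduct_mulVec, Matrix.star_eq_conjTranspose,
      Matrix.conjTranspose_eq_transpose_of_trivial, Matrix.mulVec_transpose]
  have key : ∀ y : V → ℝ, y ⬝ᵥ A.mulVec y ≤ M * (y ⬝ᵥ y) := by
    intro y
    have hspec : A = U * Matrix.diagonal hA.eigenvalues * star U := by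
      have := hA.spectral_theorem
      simpa using this
    set z : V → ℝ := (star U).mulVec y with hz
    have h1' : A.mulVec y = U.mulVec ((Matrix.diagonal hA.eigenvalues).mulVec ((star U).mulVec y)) := by
      rw [Matrix.mulVec_mulVec, Matrix.mulVec_mulVec]
      exact congrFun (congrArg Matrix.mulVec hspec) y
    have h1 : y ⬝ᵥ A.mulVec y = z ⬝ᵥ (Matrix.diagonal hA.eigenvalues).mulVec z := by
      rw [h1', hdotU]
    have h2 : z ⬝ᵥ (Matrix.diagonal hA.eigenvalues).mulVec z
        = ∑ i, hA.eigenvalues i * (z i * z i) := by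
      simp [dotProduct, Matrix.mulVec_diagonal]
      exact Finset.sum_congr rfl fun i _ => by ring
    have h3 : z ⬝ᵥ z = y ⬝ᵥ y := by
      have : z ⬝ᵥ z = y ⬝ᵥ (U.mulVec ((star U).mulVec y)) := (hdotU y _).symm
      rw [this, Matrix.mulVec_mulVec, hUU, Matrix.one_mulVec]
    have h4 : ∑ i, hA.eigenvalues i * (z i * z i) ≤ M * (z ⬝ᵥ z) := by
      rw [dotProduct, Finset.mul_sum]
      apply Finset.sum_le_sum
      intro i _
      have := hi0 i (Finset.mem_univ i)
      nlinarith [mul_self_nonneg (z i)]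
    rw [h1, h2, ← h3]
    exact h4
  have hMeig : IsEigOf A M := by
    refine ⟨hA.eigenvectorBasis i0, ?_, hA.mulVec_eigenvectorBasis i0⟩
    intro h
    exact hA.eigenvectorBasis.orthonormal.ne_zero i0 (by ext j; exact congrFun h j)
  have hbdd : ∀ μ ∈ {μ : ℝ | IsEigOf A μ}, μ ≤ M := by
    rintro μ ⟨v, hv0, hv⟩
    have h1 : v ⬝ᵥ A.mulVec v = μ * (v ⬝ᵥ v) := by
      rw [hv, dotProduct_smul, smul_eq_mul]
    have h2 := key v
    have h3 : 0 < v ⬝ᵥ v := by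
      rcases (dotProduct_self_nonneg' v).lt_or_eq with h | h
      · exact h
      · exact absurd (dotProduct_self_eq_zero.mp h.symm) hv0
    nlinarith
  have hle : M ≤ maxEig A := le_csSup ⟨M, hbdd⟩ hMeig
  have := key x
  have hxx : 0 ≤ x ⬝ᵥ x := dotProduct_self_nonneg' x
  nlinarith

lemma distLaplacian_isHermitian (G : SimpleGraph V) : (distLaplacian G).IsHermitian := by
  show (distLaplacian G)ᴴ = distLaplacian G
  ext i j
  rw [Matrix.conjTranspose_apply, star_trivial]
  rcases eq_or_ne i j with h | h
  · subst h; rfl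
  · show (Matrix.diagonal (transmission G) - distMatrix G) j i
        = (Matrix.diagonal (transmission G) - distMatrix G) i j
    rw [Matrix.sub_apply, Matrix.sub_apply, Matrix.diagonal_apply_ne _ h.symm,
      Matrix.diagonal_apply_ne _ h]
    have : G.dist j i = G.dist i j := SimpleGraph.dist_comm
    show (0:ℝ) - ((G.dist j i : ℕ) : ℝ) = 0 - ((G.dist i j : ℕ) : ℝ)
    rw [this]

lemma auxCaseA (C S d R : ℝ) (hd1 : 1 ≤ d) (hS0 : 0 ≤ S) (hSd : d + 2 ≤ S)
    (hCS : S*S ≤ C*d) (hR0 : 0 ≤ R) : 0 < C + d*S - S - d^2 + R/2 := by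
  have h2 : 0 ≤ (S - d - 2) * (S + d^2) := mul_nonneg (by linarith) (by positivity)
  have hd2 : (1:ℝ) ≤ d^2 := by nlinarith
  have h3 : (1:ℝ) ≤ S + d^2 := by linarith
  have h4 : 2 ≤ (S - d) * (S + d^2) := by nlinarith [h2, h3]
  have h5 : 0 < d * (C + d*S - S - d^2) := by nlinarith [hCS, h4]
  have h01 : 0 < d := by linarith
  have h6 : 0 < C + d*S - S - d^2 := by
    by_contra h6
    push_neg at h6
    nlinarith [h5, mul_nonneg h01.le (neg_nonneg.mpr h6)]
  linarith

lemma auxCaseB (d R : ℝ) (hR1 : 1 ≤ R) : 0 < d + d*d - d - d^2 + R/2 := by nlinarith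

lemma auxFinal (q xx M D1 e : ℝ) (hkey : q - (D1 + 2) * xx = e) (hpos : 0 < e)
    (hray : q ≤ M * xx) (hxx : 0 < xx) : D1 + 2 < M := by
  have hlt : (D1 + 2) * xx < M * xx := by linarith
  exact lt_of_mul_lt_mul_right hlt hxx.le

set_option maxHeartbeats 1000000 in
/-- For a connected graph of diameter at least `3` with maximum
transmission `D₁`, the distance Laplacian spectral radius is strictly greater
than `D₁ + 2`. -/
theorem stmt8 (G : SimpleGraph V) (hG : G.Connected) (hd : 3 ≤ G.diam) (D1 : ℝ)
    (hD1 : IsGreatest (Set.range (transmission G)) D1) :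
    D1 + 2 < maxEig (distLaplacian G) := by
  classical
  have hne : Nonempty V := hG.nonempty
  obtain ⟨a0, b0, hab0⟩ := G.exists_dist_eq_diam
  have hab3 : 3 ≤ G.dist a0 b0 := hab0 ▸ hd
  obtain ⟨u, hu⟩ := hD1.1
  have hmax : ∀ v : V, transmission G v ≤ D1 := fun v => hD1.2 ⟨v, rfl⟩
  set A : Finset V := Finset.univ.erase u with hAdef
  set dm : V → V → ℝ := fun i j => (G.dist i j : ℝ) with hdmdef
  set t : V → ℝ := fun v => dm u v with htdef
  set w : V → ℝ := fun v => t v - 1 with hwdef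
  set d : ℝ := ∑ v ∈ A, w v with hddef
  set S : ℝ := ∑ v ∈ A, (w v)^2 with hSdef
  set C : ℝ := ∑ v ∈ A, (w v)^3 with hCdef
  set m : ℝ := (A.card : ℝ) with hmdef
  -- basic facts
  have hdmcomm : ∀ i j : V, dm i j = dm j i := by
    intro i j; show ((G.dist i j : ℕ) : ℝ) = ((G.dist j i : ℕ) : ℝ)
    rw [SimpleGraph.dist_comm]
  have hdm00 : ∀ i : V, dm i i = 0 := by
    intro i; show ((G.dist i i : ℕ) : ℝ) = 0; simp [SimpleGraph.dist_self]
  have hmemA : ∀ v : V, v ≠ u → v ∈ A := fun v hv => Finset.mem_erase.mpr ⟨hv, Finset.mem_univ v⟩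
  have hneA : ∀ v ∈ A, v ≠ u := fun v hv => (Finset.mem_erase.mp hv).1
  have hdist1 : ∀ v ∈ A, 1 ≤ G.dist u v := fun v hv =>
    hG.pos_dist_of_ne (Ne.symm (hneA v hv))
  have hw0 : ∀ v ∈ A, 0 ≤ w v := by
    intro v hv
    have h1 : (1 : ℝ) ≤ (G.dist u v : ℝ) := by exact_mod_cast hdist1 v hv
    show (0:ℝ) ≤ ((G.dist u v : ℕ) : ℝ) - 1
    linarith
  have split : ∀ f : V → ℝ, ∑ i, f i = f u + ∑ v ∈ A, f v := fun f =>
    (Finset.add_sum_erase Finset.univ f (Finset.mem_univ u)).symm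
  have htu : t u = 0 := hdm00 u
  have hsumtA : ∑ v ∈ A, t v = D1 := by
    have h1 : transmission G u = ∑ j, t j := rfl
    rw [split t, htu, zero_add] at h1
    rw [← h1, hu]
  have hd1m : D1 = m + d := by
    have h1 : ∑ v ∈ A, w v = (∑ v ∈ A, t v) - ∑ v ∈ A, (1:ℝ) := by
      rw [← Finset.sum_sub_distrib]
    rw [Finset.sum_const, nsmul_eq_mul, mul_one, hsumtA] at h1
    rw [← hddef] at h1
    rw [← hmdef] at h1
    linarith
  -- there is a vertex at distance ≥ 2 from u
  have hz2 : ∃ z : V, 2 ≤ G.dist u z := by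
    by_contra h
    push_neg at h
    have t1 : G.dist a0 b0 ≤ G.dist a0 u + G.dist u b0 := hG.dist_triangle
    have t2 : G.dist a0 u = G.dist u a0 := SimpleGraph.dist_comm
    have h1 := h a0; have h2 := h b0
    omega
  obtain ⟨z0, hz0⟩ := hz2
  have hz0u : z0 ≠ u := by
    intro h; subst h; rw [SimpleGraph.dist_self] at hz0; omega
  have hz0A : z0 ∈ A := hmemA z0 hz0u
  have hd1 : 1 ≤ d := by
    have h1 : w z0 ≤ d := Finset.single_le_sum hw0 hz0A
    have h2 : (2:ℝ) ≤ (G.dist u z0 : ℝ) := by exact_mod_cast hz0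
    have h3 : (1:ℝ) ≤ w z0 := by
      show (1:ℝ) ≤ ((G.dist u z0 : ℕ):ℝ) - 1; linarith
    linarith
  have hS0 : 0 ≤ S := Finset.sum_nonneg fun v _ => sq_nonneg _
  -- the test vector
  set x : V → ℝ := fun v => if v = u then d else -(w v) with hxdef
  have hxu : x u = d := by simp [hxdef]
  have hxv : ∀ v ∈ A, x v = -(w v) := by
    intro v hv; simp [hxdef, hneA v hv]
  have hn : x ⬝ᵥ x = d^2 + S := by
    show ∑ i, x i * x i = d^2 + S
    rw [split (fun i => x i * x i), hxu]
    have h1 : ∑ v ∈ A, x v * x v = S := by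
      rw [hSdef]
      exact Finset.sum_congr rfl fun v hv => by rw [hxv v hv]; ring
    rw [h1]; ring
  -- named sums
  set E1 : ℝ := ∑ v ∈ A, transmission G v * (w v)^2 with hE1def
  set E2 : ℝ := ∑ v ∈ A, t v * w v with hE2def
  set E3 : ℝ := ∑ v ∈ A, t v * (w v)^2 with hE3def
  set W : ℝ := ∑ v ∈ A, ∑ v' ∈ A, dm v v' * (w v * w v') with hWdef
  set P : ℝ := ∑ v ∈ A, ∑ v' ∈ A, dm v v' * (w v - w v')^2 with hPdef
  set R : ℝ := ∑ v ∈ A, ∑ v' ∈ A, (dm v v' - 1) * (w v - w v')^2 with hRdef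
  -- mulVec formula
  have hLx : ∀ i, (distLaplacian G).mulVec x i
      = transmission G i * x i - ∑ j, dm i j * x j := by
    intro i
    rw [distLaplacian, Matrix.sub_mulVec]
    simp only [Pi.sub_apply]
    rw [Matrix.mulVec_diagonal]
    rfl
  have hdot : x ⬝ᵥ (distLaplacian G).mulVec x
      = (∑ i, transmission G i * (x i)^2) - ∑ i, ∑ j, dm i j * (x i * x j) := by
    show ∑ i, x i * (distLaplacian G).mulVec x i = _
    rw [← Finset.sum_sub_distrib]
    refine Finset.sum_congr rfl fun i _ => ?_
    rw [hLx i, mul_sub, Finset.mul_sum]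
    congr 1
    · ring
    · exact Finset.sum_congr rfl fun j _ => by ring
  have hT1 : ∑ i, transmission G i * (x i)^2 = D1 * d^2 + E1 := by
    rw [split (fun i => transmission G i * (x i)^2), hxu, hu, hE1def]
    congr 1
    exact Finset.sum_congr rfl fun v hv => by rw [hxv v hv]; ring
  have hT2 : ∑ i, ∑ j, dm i j * (x i * x j) = -(2*(d*E2)) + W := by
    have inner : ∀ i : V, ∑ j, dm i j * (x i * x j)
        = dm i u * (x i * d) + ∑ v' ∈ A, dm i v' * (x i * x v') := by
      intro i
      rw [split (fun j => dm i j * (x i * x j)), hxu]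
    rw [split (fun i => ∑ j, dm i j * (x i * x j)), inner u]
    have hsum2 : ∑ v ∈ A, ∑ j, dm v j * (x v * x j)
        = ∑ v ∈ A, (dm v u * (x v * d) + ∑ v' ∈ A, dm v v' * (x v * x v')) :=
      Finset.sum_congr rfl fun v _ => inner v
    rw [hsum2, Finset.sum_add_distrib]
    have hb : ∑ v' ∈ A, dm u v' * (x u * x v') = -(d * E2) := by
      have h2 : ∑ v' ∈ A, dm u v' * (x u * x v') + d * E2 = 0 := by
        rw [hE2def, Finset.mul_sum, ← Finset.sum_add_distrib]
        refine Finset.sum_eq_zero fun v' hv' => ?_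
        rw [hxu, hxv v' hv']
        show t v' * (d * -(w v')) + d * (t v' * w v') = 0
        ring
      linarith
    have hc : ∑ v ∈ A, dm v u * (x v * d) = -(d * E2) := by
      have h2 : ∑ v ∈ A, dm v u * (x v * d) + d * E2 = 0 := by
        rw [hE2def, Finset.mul_sum, ← Finset.sum_add_distrib]
        refine Finset.sum_eq_zero fun v hv => ?_
        rw [hxv v hv, hdmcomm v u]
        show t v * (-(w v) * d) + d * (t v * w v) = 0
        ring
      linarith
    have hdd' : ∑ v ∈ A, ∑ v' ∈ A, dm v v' * (x v * x v') = W := by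
      rw [hWdef]
      refine Finset.sum_congr rfl fun v hv => Finset.sum_congr rfl fun v' hv' => ?_
      rw [hxv v hv, hxv v' hv']
      ring
    rw [hb, hc, hdd', hdm00 u, hxu]
    ring
  -- row sums of the distance matrix over A
  have hrow : ∀ v : V, ∑ v' ∈ A, dm v v' = transmission G v - t v := by
    intro v
    have h1 : ∑ j, dm v j = transmission G v := rfl
    rw [split (fun j => dm v j)] at h1
    have h2 : dm v u = t v := hdmcomm v u
    linarith
  have hcol : ∀ v' : V, ∑ v ∈ A, dm v v' = transmission G v' - t v' := by
    intro v'
    rw [Finset.sum_congr rfl fun v _ => hdmcomm v v']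
    exact hrow v'
  -- P = 2 (E1 - E3) - 2 W
  have hP2 : P = 2*(E1 - E3) - 2*W := by
    have point : ∀ v ∈ A, ∀ v' ∈ A, dm v v' * (w v - w v')^2
        = dm v v' * (w v)^2 + dm v v' * (w v')^2 - 2 * (dm v v' * (w v * w v')) := by
      intros; ring
    have h0 : P = (∑ v ∈ A, ∑ v' ∈ A, dm v v' * (w v)^2)
        + (∑ v ∈ A, ∑ v' ∈ A, dm v v' * (w v')^2)
        - 2 * W := by
      rw [hPdef, hWdef, Finset.mul_sum, ← Finset.sum_add_distrib, ← Finset.sum_sub_distrib]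
      refine Finset.sum_congr rfl fun v hv => ?_
      rw [Finset.mul_sum, ← Finset.sum_add_distrib, ← Finset.sum_sub_distrib]
      exact Finset.sum_congr rfl fun v' hv' => point v hv v' hv'
    have hA1 : ∑ v ∈ A, ∑ v' ∈ A, dm v v' * (w v)^2 = E1 - E3 := by
      have h1 : ∀ v ∈ A, ∑ v' ∈ A, dm v v' * (w v)^2
          = transmission G v * (w v)^2 - t v * (w v)^2 := by
        intro v _
        rw [← Finset.sum_mul, hrow v]; ring
      rw [Finset.sum_congr rfl h1, Finset.sum_sub_distrib, ← hE1def, ← hE3def]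
    have hA2 : ∑ v ∈ A, ∑ v' ∈ A, dm v v' * (w v')^2 = E1 - E3 := by
      rw [Finset.sum_comm]
      have h1 : ∀ v' ∈ A, ∑ v ∈ A, dm v v' * (w v')^2
          = transmission G v' * (w v')^2 - t v' * (w v')^2 := by
        intro v' _
        rw [← Finset.sum_mul, hcol v']; ring
      rw [Finset.sum_congr rfl h1, Finset.sum_sub_distrib, ← hE1def, ← hE3def]
    rw [h0, hA1, hA2]; ring
  -- E2 and E3 in terms of S, C, d
  have he2 : E2 = S + d := by
    have h1 : ∀ v ∈ A, t v * w v = (w v)^2 + w v := by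
      intro v _
      show t v * (t v - 1) = (t v - 1)^2 + (t v - 1)
      ring
    rw [hE2def, Finset.sum_congr rfl h1, Finset.sum_add_distrib, ← hSdef, ← hddef]
  have he3 : E3 = C + S := by
    have h1 : ∀ v ∈ A, t v * (w v)^2 = (w v)^3 + (w v)^2 := by
      intro v _
      show t v * (t v - 1)^2 = (t v - 1)^3 + (t v - 1)^2
      ring
    rw [hE3def, Finset.sum_congr rfl h1, Finset.sum_add_distrib, ← hSdef, ← hCdef]
  -- P = 2 m S - 2 d² + R
  have hsq : ∑ v ∈ A, ∑ v' ∈ A, (w v - w v')^2 = 2*(m*S) - 2*d^2 := by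
    have inner : ∀ v ∈ A, ∑ v' ∈ A, (w v - w v')^2 = m * (w v)^2 - (2 * w v) * d + S := by
      intro v _
      have e : ∀ v' ∈ A, (w v - w v')^2 = (w v)^2 - (2 * w v) * w v' + (w v')^2 := by
        intros; ring
      rw [Finset.sum_congr rfl e, Finset.sum_add_distrib, Finset.sum_sub_distrib,
        Finset.sum_const, ← Finset.mul_sum, ← hddef, ← hSdef, nsmul_eq_mul, ← hmdef]
    rw [Finset.sum_congr rfl inner, Finset.sum_add_distrib, Finset.sum_sub_distrib,
      ← Finset.mul_sum, ← hSdef, Finset.sum_const, nsmul_eq_mul, ← hmdef]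
    have h2 : ∑ v ∈ A, (2 * w v) * d = 2 * d * d := by
      have e : ∀ v ∈ A, (2 * w v) * d = (2*d) * w v := by intros; ring
      rw [Finset.sum_congr rfl e, ← Finset.mul_sum, ← hddef]
    rw [h2]; ring
  have hPR : P = (2*(m*S) - 2*d^2) + R := by
    rw [← hsq, hPdef, hRdef, ← Finset.sum_add_distrib]
    refine Finset.sum_congr rfl fun v _ => ?_
    rw [← Finset.sum_add_distrib]
    refine Finset.sum_congr rfl fun v' _ => ?_
    ring
  -- the key identity
  have hkey : x ⬝ᵥ (distLaplacian G).mulVec x - (D1 + 2) * (x ⬝ᵥ x)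
      = C + d*S - S - d^2 + R/2 := by
    have hW : W = (E1 - E3) - P/2 := by linarith [hP2]
    rw [hdot, hT1, hT2, hn, hW, he3, hPR, he2, hd1m]
    ring
  -- nonnegativity of R terms
  have hgnn : ∀ v ∈ A, ∀ v' ∈ A, 0 ≤ (dm v v' - 1) * (w v - w v')^2 := by
    intro v _ v' _
    rcases eq_or_ne v v' with h | h
    · subst h; simp
    · have h1 : 1 ≤ G.dist v v' := hG.pos_dist_of_ne h
      have h2 : (1:ℝ) ≤ dm v v' := by
        show (1:ℝ) ≤ ((G.dist v v' : ℕ) : ℝ); exact_mod_cast h1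
      exact mul_nonneg (by linarith) (sq_nonneg _)
  have hinnerR : ∀ v ∈ A, 0 ≤ ∑ v' ∈ A, (dm v v' - 1) * (w v - w v')^2 :=
    fun v hv => Finset.sum_nonneg fun v' hv' => hgnn v hv v' hv'
  have hR0 : 0 ≤ R := Finset.sum_nonneg hinnerR
  -- main positivity, by cases
  have hpos : 0 < C + d*S - S - d^2 + R/2 := by
    by_cases hcase : ∃ z : V, 3 ≤ G.dist u z
    · -- Case A : some vertex at distance ≥ 3 from u
      obtain ⟨z, hz3⟩ := hcase
      have hzu : z ≠ u := by
        intro h; subst h; rw [SimpleGraph.dist_self] at hz3; omega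
      have hzA : z ∈ A := hmemA z hzu
      have hwz : (2:ℝ) ≤ w z := by
        have : (3:ℝ) ≤ ((G.dist u z : ℕ) : ℝ) := by exact_mod_cast hz3
        show (2:ℝ) ≤ ((G.dist u z : ℕ):ℝ) - 1
        linarith
      have hww : ∀ v ∈ A, 0 ≤ (w v)^2 - w v := by
        intro v hv
        rcases Nat.lt_or_ge (G.dist u v) 2 with h | h
        · have h1 : G.dist u v = 1 := by have := hdist1 v hv; omega
          have h2 : w v = 0 := by
            show ((G.dist u v : ℕ):ℝ) - 1 = 0
            rw [h1]; norm_num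
          rw [h2]; norm_num
        · have h2 : (1:ℝ) ≤ w v := by
            have : (2:ℝ) ≤ ((G.dist u v : ℕ):ℝ) := by exact_mod_cast h
            show (1:ℝ) ≤ ((G.dist u v : ℕ):ℝ) - 1
            linarith
          nlinarith
      have hSd : d + 2 ≤ S := by
        have h1 : ∑ v ∈ A, ((w v)^2 - w v) = S - d := by
          rw [Finset.sum_sub_distrib, ← hSdef, ← hddef]
        have h2 : (w z)^2 - w z ≤ ∑ v ∈ A, ((w v)^2 - w v) :=
          Finset.single_le_sum hww hzA
        nlinarith
      have hCS : S*S ≤ C*d := by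
        have expand : ∑ v ∈ A, ∑ v' ∈ A, (w v * w v' * (w v - w v')^2)
            = 2*(C*d) - 2*(S*S) := by
          have inner : ∀ v ∈ A, ∑ v' ∈ A, (w v * w v' * (w v - w v')^2)
              = (w v)^3 * d - (2*(w v)^2) * S + w v * C := by
            intro v _
            have e : ∀ v' ∈ A, w v * w v' * (w v - w v')^2
                = (w v)^3 * w v' - (2*(w v)^2) * (w v')^2 + w v * (w v')^3 := by
              intros; ring
            rw [Finset.sum_congr rfl e, Finset.sum_add_distrib, Finset.sum_sub_distrib,
              ← Finset.mul_sum, ← Finset.mul_sum, ← Finset.mul_sum,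
              ← hddef, ← hSdef, ← hCdef]
          rw [Finset.sum_congr rfl inner, Finset.sum_add_distrib, Finset.sum_sub_distrib]
          have g1 : ∑ v ∈ A, (w v)^3 * d = C * d := by
            rw [← Finset.sum_mul, ← hCdef]
          have g2 : ∑ v ∈ A, (2*(w v)^2) * S = 2*S*S := by
            have e : ∀ v ∈ A, (2*(w v)^2) * S = (2*S) * (w v)^2 := by intros; ring
            rw [Finset.sum_congr rfl e, ← Finset.mul_sum, ← hSdef]
          have g3 : ∑ v ∈ A, w v * C = d * C := by
            rw [← Finset.sum_mul, ← hddef]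
          rw [g1, g2, g3]; ring
        have hnn : 0 ≤ ∑ v ∈ A, ∑ v' ∈ A, (w v * w v' * (w v - w v')^2) :=
          Finset.sum_nonneg fun v hv => Finset.sum_nonneg fun v' hv' =>
            mul_nonneg (mul_nonneg (hw0 v hv) (hw0 v' hv')) (sq_nonneg _)
        linarith
      exact auxCaseA C S d R hd1 hS0 hSd hCS hR0
    · -- Case B : all vertices at distance ≤ 2 from u
      have hle2 : ∀ v : V, G.dist u v ≤ 2 := by
        intro v
        by_contra hv
        exact hcase ⟨v, by omega⟩
      have hw01 : ∀ v ∈ A, w v = 0 ∨ w v = 1 := by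
        intro v hv
        have h1 := hdist1 v hv
        have h2 := hle2 v
        have h3 : G.dist u v = 1 ∨ G.dist u v = 2 := by omega
        rcases h3 with h3 | h3
        · left; show ((G.dist u v : ℕ):ℝ) - 1 = 0; rw [h3]; norm_num
        · right; show ((G.dist u v : ℕ):ℝ) - 1 = 1; rw [h3]; norm_num
      have hSd : S = d := by
        rw [hSdef, hddef]
        refine Finset.sum_congr rfl fun v hv => ?_
        rcases hw01 v hv with h | h <;> rw [h] <;> norm_num
      have hCd : C = d := by
        rw [hCdef, hddef]
        refine Finset.sum_congr rfl fun v hv => ?_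
        rcases hw01 v hv with h | h <;> rw [h] <;> norm_num
      -- find the special pair b, c
      have hau : a0 ≠ u := by
        intro h
        rw [h] at hab3
        have := hle2 b0; omega
      have hbu : b0 ≠ u := by
        intro h
        rw [h] at hab3
        have h1 : G.dist a0 u = G.dist u a0 := SimpleGraph.dist_comm
        have := hle2 a0; omega
      have hda1 : 1 ≤ G.dist u a0 := hG.pos_dist_of_ne (Ne.symm hau)
      have hdb1 : 1 ≤ G.dist u b0 := hG.pos_dist_of_ne (Ne.symm hbu)
      obtain ⟨b, c, hub, huc, hbc⟩ :
          ∃ b c : V, G.dist u b = 2 ∧ G.dist u c = 1 ∧ 2 ≤ G.dist b c := by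
        by_cases hda : G.dist u a0 = 2
        · by_cases hdb : G.dist u b0 = 2
          · -- both at distance 2 : pick a neighbor of u on a geodesic to a0
            obtain ⟨p, hp⟩ := hG.exists_walk_length_eq_dist u a0
            cases p with
            | nil => rw [SimpleGraph.Walk.length_nil] at hp; omega
            | @cons _ c' _ hadj q =>
              rw [SimpleGraph.Walk.length_cons] at hp
              have hq1 : q.length = 1 := by omega
              have hqc : G.dist c' a0 ≤ 1 := by
                have := SimpleGraph.dist_le q; omega
              have huc' : G.dist u c' = 1 := SimpleGraph.dist_eq_one_iff_adj.mpr hadj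
              refine ⟨b0, c', hdb, huc', ?_⟩
              have t1 : G.dist a0 b0 ≤ G.dist a0 c' + G.dist c' b0 := hG.dist_triangle
              have t2 : G.dist a0 c' = G.dist c' a0 := SimpleGraph.dist_comm
              have t3 : G.dist b0 c' = G.dist c' b0 := SimpleGraph.dist_comm
              omega
          · -- dist u b0 = 1
            have hdb' : G.dist u b0 = 1 := by have := hle2 b0; omega
            exact ⟨a0, b0, hda, hdb', by omega⟩
        · -- dist u a0 = 1
          have hda' : G.dist u a0 = 1 := by have := hle2 a0; omega
          by_cases hdb : G.dist u b0 = 2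
          · refine ⟨b0, a0, hdb, hda', ?_⟩
            have t3 : G.dist b0 a0 = G.dist a0 b0 := SimpleGraph.dist_comm
            omega
          · exfalso
            have hdb' : G.dist u b0 = 1 := by have := hle2 b0; omega
            have t1 : G.dist a0 b0 ≤ G.dist a0 u + G.dist u b0 := hG.dist_triangle
            have t2 : G.dist a0 u = G.dist u a0 := SimpleGraph.dist_comm
            omega
      have hbA : b ∈ A := hmemA b (by intro h; subst h; rw [SimpleGraph.dist_self] at hub; omega)
      have hcA : c ∈ A := hmemA c (by intro h; subst h; rw [SimpleGraph.dist_self] at huc; omega)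
      have hwb : w b = 1 := by show ((G.dist u b : ℕ):ℝ) - 1 = 1; rw [hub]; norm_num
      have hwc : w c = 0 := by show ((G.dist u c : ℕ):ℝ) - 1 = 0; rw [huc]; norm_num
      have hterm : 1 ≤ (dm b c - 1) * (w b - w c)^2 := by
        have h2 : (2:ℝ) ≤ dm b c := by
          show (2:ℝ) ≤ ((G.dist b c : ℕ):ℝ); exact_mod_cast hbc
        rw [hwb, hwc]
        nlinarith
      have hR1 : 1 ≤ R := by
        have s2 : (dm b c - 1) * (w b - w c)^2
            ≤ ∑ v' ∈ A, (dm b v' - 1) * (w b - w v')^2 :=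
          Finset.single_le_sum (fun v' hv' => hgnn b hbA v' hv') hcA
        have s1 : (∑ v' ∈ A, (dm b v' - 1) * (w b - w v')^2) ≤ R :=
          Finset.single_le_sum hinnerR hbA
        linarith
      rw [hSd, hCd]
      exact auxCaseB d R hR1
  -- conclude via the Rayleigh quotient
  have hherm := distLaplacian_isHermitian G
  have hray := rayleigh_le_maxEig (distLaplacian G) hherm x
  have hxx : 0 < x ⬝ᵥ x := by
    rw [hn]
    have : (0:ℝ) < d^2 := by positivity
    linarith
  exact auxFinal _ _ _ _ _ hkey hpos hray hxx
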